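/- In the setting of the previous teardrop-recognition lemma, continuity of h⁻¹ holds: if x_n ∈ X \ Y is a sequence converging to x₀ ∈ Y in the teardrop topology of (X \ Y) ∪_{φ|} Y, then β̃(x_n) → x₀ in X. -/
import Mathlib


/-- Continuity of `h⁻¹` in the teardrop-recognition lemma: if `x_n ∈ X \ Y`
converges to `x₀ ∈ Y` in the teardrop topology (i.e. `φ(x_n) → (x₀,0)` in
`Y × [0,∞)`), then `β̃(x_n) → x₀` in `X`. -/
theorem teardrop_recognition_inverse_continuous {X : Type*} [TopologicalSpace X]
    [LocallyCompactSpace X] [T2Space X] [SecondCountableTopology X]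
    (Y A : Set X) (hYc : IsClosed Y) (hAc : IsClosed A) (hAY : A ⊆ Y)
    (β : X → X) (hβ : IsProperMap β) (hβsurj : Function.Surjective β)
    (hβY : β ⁻¹' Y = Y) (hβid : ∀ a ∈ A, β a = a)
    (φ : X → ↥Y × ℝ) (hφprop : IsProperMap φ) (hφnn : ∀ x, 0 ≤ (φ x).2)
    (hφfib : ∀ x, ((φ x).2 = 0 ↔ x ∈ Y))
    (hφid : ∀ x, x ∈ Y → ((φ x).1 : X) = β x ∧ (φ x).2 = 0)
    (x : ℕ → X) (hx : ∀ n, x n ∉ Y) (x₀ : X) (hx₀ : x₀ ∈ Y)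
    (hconv : Filter.Tendsto (fun n => φ (x n)) Filter.atTop
      (nhds ((⟨x₀, hx₀⟩ : ↥Y), (0 : ℝ)))) :
    Filter.Tendsto (fun n => β (x n)) Filter.atTop (nhds x₀) := by
  -- The set S = {limit} ∪ range of φ∘x is compact; its preimage K under φ is compact
  have hScomp : IsCompact (insert ((⟨x₀, hx₀⟩ : ↥Y), (0 : ℝ))
      (Set.range fun n => φ (x n))) := hconv.isCompact_insert_range
  have hKcomp : IsCompact (φ ⁻¹' (insert ((⟨x₀, hx₀⟩ : ↥Y), (0 : ℝ))
      (Set.range fun n => φ (x n)))) := hφprop.isCompact_preimage hScomp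
  set K := φ ⁻¹' (insert ((⟨x₀, hx₀⟩ : ↥Y), (0 : ℝ)) (Set.range fun n => φ (x n)))
    with hKdef
  have hxK : ∀ n, x n ∈ K := fun n => Set.mem_preimage.2 (Set.mem_insert_of_mem _ ⟨n, rfl⟩)
  -- It suffices to show every subsequence has a further subsequence converging to x₀
  apply Filter.tendsto_of_subseq_tendsto
  intro ns hns
  -- extract a convergent subsequence of x ∘ ns using sequential compactness of K
  obtain ⟨x₀', hx₀'K, ms, hms, hlim⟩ := hKcomp.isSeqCompact (fun n => hxK (ns n))
  refine ⟨ms, ?_⟩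
  -- φ (x (ns (ms n))) tends both to φ x₀' and to (x₀, 0), so they agree
  have hφcont : Continuous φ := hφprop.continuous
  have h1 : Filter.Tendsto (fun n => φ (x (ns (ms n)))) Filter.atTop (nhds (φ x₀')) :=
    (hφcont.tendsto x₀').comp hlim
  have h2 : Filter.Tendsto (fun n => φ (x (ns (ms n)))) Filter.atTop
      (nhds ((⟨x₀, hx₀⟩ : ↥Y), (0 : ℝ))) :=
    hconv.comp (hns.comp hms.tendsto_atTop)
  have hφeq : φ x₀' = ((⟨x₀, hx₀⟩ : ↥Y), (0 : ℝ)) := tendsto_nhds_unique h1 h2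
  have hx₀'Y : x₀' ∈ Y := (hφfib x₀').1 (by rw [hφeq])
  have hβx₀' : β x₀' = x₀ := by
    have := (hφid x₀' hx₀'Y).1
    rw [hφeq] at this
    exact this.symm
  have : Filter.Tendsto (fun n => β (x (ns (ms n)))) Filter.atTop (nhds (β x₀')) :=
    (hβ.continuous.tendsto x₀').comp hlim
  rwa [hβx₀'] at this
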